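/- Let X be a locally compact metric space, f : X → ℝⁿ a continuous map, and y₀ ∈ ℝⁿ such that the fiber f⁻¹{y₀} is totally disconnected. Then for every x₀ ∈ f⁻¹{y₀} there exists ε₁ > 0 such that the connected component U_{ε₁}(x₀) of x₀ in the open set f⁻¹(B(y₀, ε₁)) has compact closure contained in X. -/
import Mathlib


/-- If the fiber `f⁻¹{y₀}` of a continuous map on a locally compact metric space is
totally disconnected, then for every `x₀` in the fiber there is `ε₁ > 0` such that the
connected component of `x₀` in `f⁻¹(B(y₀, ε₁))` has compact closure. -/
theorem stmt_8 {X : Type*} [MetricSpace X] [LocallyCompactSpace X]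
    (n : ℕ) (f : X → EuclideanSpace ℝ (Fin n)) (hf : Continuous f)
    (y₀ : EuclideanSpace ℝ (Fin n))
    (hfiber : IsTotallyDisconnected (f ⁻¹' {y₀}))
    (x₀ : X) (hx₀ : f x₀ = y₀) :
    ∃ ε₁ : ℝ, 0 < ε₁ ∧
      IsCompact (closure (connectedComponentIn (f ⁻¹' Metric.ball y₀ ε₁) x₀)) := by
  classical
  -- a compact neighborhood of x₀
  obtain ⟨K, hKc, hKn⟩ := exists_compact_mem_nhds x₀
  have hx₀K : x₀ ∈ interior K := mem_interior_iff_mem_nhds.2 hKn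
  -- F : the piece of the fiber inside K, a compact totally disconnected set
  set F : Set X := K ∩ f ⁻¹' {y₀} with hF
  have hFc : IsCompact F := hKc.inter_right (isClosed_singleton.preimage hf)
  have hFtd : IsTotallyDisconnected F := fun t ht h't =>
    hfiber t (ht.trans Set.inter_subset_right) h't
  have hx₀F : x₀ ∈ F := ⟨mem_of_mem_nhds hKn, by simp [hx₀]⟩
  -- work inside the subtype F : compact, T2, totally disconnected
  haveI : CompactSpace F := isCompact_iff_compactSpace.1 hFc
  haveI : TotallyDisconnectedSpace F := totallyDisconnectedSpace_subtype_iff.2 hFtd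
  -- find a clopen (in F) set V around x₀ contained in interior K
  obtain ⟨V, hVclopen, hx₀V, hVsub⟩ :=
    compact_exists_isClopen_in_isOpen (U := (Subtype.val : F → X) ⁻¹' interior K)
      (isOpen_interior.preimage continuous_subtype_val) (by exact hx₀K : (⟨x₀, hx₀F⟩ : F) ∈ _)
  -- B and F \ B are disjoint compacts in X
  set B : Set X := Subtype.val '' V with hB
  have hBc : IsCompact B :=
    (hVclopen.1.isCompact).image continuous_subtype_val
  have hBK : B ⊆ interior K := by
    rintro x ⟨⟨x, hxF⟩, hxV, rfl⟩
    exact hVsub hxV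
  have hCc : IsCompact (F \ B) := by
    have : F \ B = Subtype.val '' (Vᶜ) := by
      ext x
      constructor
      · rintro ⟨hxF, hxB⟩
        exact ⟨⟨x, hxF⟩, fun h => hxB ⟨⟨x, hxF⟩, h, rfl⟩, rfl⟩
      · rintro ⟨⟨x, hxF⟩, hxV, rfl⟩
        exact ⟨hxF, fun ⟨y, hyV, hyx⟩ => hxV (by rwa [← Subtype.ext hyx.symm] at hyV)⟩
    rw [this]
    exact (hVclopen.2.isClosed_compl.isCompact).image continuous_subtype_val
  have hdisj : Disjoint B (F \ B) := Set.disjoint_sdiff_right.mono_left le_rfl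
  -- separate them by disjoint open sets; shrink u into interior K
  obtain ⟨u, v, huo, hvo, hBu, hCv, huv⟩ := SeparatedNhds.of_isCompact_isCompact hBc hCc hdisj
  set u' : Set X := u ∩ interior K with hu'
  have hu'o : IsOpen u' := huo.inter isOpen_interior
  have hBu' : B ⊆ u' := fun x hx => ⟨hBu hx, hBK hx⟩
  have hu'v : Disjoint u' v := huv.mono_left Set.inter_subset_left
  have hFuv : F ⊆ u' ∪ v := by
    intro x hxF
    by_cases hxB : x ∈ B
    · exact Or.inl (hBu' hxB)
    · exact Or.inr (hCv ⟨hxF, hxB⟩)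
  -- shrink ε so that K ∩ f⁻¹(closedBall y₀ ε) ⊆ u' ∪ v
  have key : ∃ m : ℕ, K ∩ (f ⁻¹' Metric.closedBall y₀ ((m : ℝ) + 1)⁻¹ \ (u' ∪ v)) = ∅ := by
    apply hKc.elim_directed_family_closed
      (fun m : ℕ => f ⁻¹' Metric.closedBall y₀ ((m : ℝ) + 1)⁻¹ \ (u' ∪ v))
    · intro m
      exact ((Metric.isClosed_closedBall).preimage hf).inter (hu'o.union hvo).isClosed_compl
    · rw [Set.eq_empty_iff_forall_notMem]
      rintro x ⟨hxK, hx⟩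
      rw [Set.mem_iInter] at hx
      have h : ∀ m : ℕ, f x ∈ Metric.closedBall y₀ ((m : ℝ) + 1)⁻¹ ∧ x ∉ u' ∪ v := fun m => hx m
      have hfx : f x = y₀ := by
        have : ∀ m : ℕ, dist (f x) y₀ ≤ ((m : ℝ) + 1)⁻¹ := fun m => (h m).1
        have h0 : dist (f x) y₀ ≤ 0 :=
          ge_of_tendsto' tendsto_one_div_add_atTop_nhds_zero_nat
            (fun m => by simpa [one_div] using this m)
        exact dist_le_zero.1 h0
      exact (h 0).2 (hFuv ⟨hxK, by simp [hfx]⟩)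
    · intro a b
      refine ⟨max a b, Set.diff_subset_diff_left ?_, Set.diff_subset_diff_left ?_⟩ <;>
        refine Set.preimage_mono (Metric.closedBall_subset_closedBall ?_) <;>
        · apply inv_anti₀ (by positivity)
          have := Nat.cast_le (α := ℝ).2 (le_max_left a b)
          have := Nat.cast_le (α := ℝ).2 (le_max_right a b)
          linarith
  obtain ⟨m, hm⟩ := key
  set ε : ℝ := ((m : ℝ) + 1)⁻¹ with hε
  have hεpos : 0 < ε := by positivity
  refine ⟨ε, hεpos, ?_⟩
  -- L : the compact "collar", and A := L ∩ u' its clopen-in-L part around x₀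
  set L : Set X := K ∩ f ⁻¹' Metric.closedBall y₀ ε with hL
  have hLc : IsCompact L := hKc.inter_right ((Metric.isClosed_closedBall).preimage hf)
  have hLuv : L ⊆ u' ∪ v := by
    intro x hx
    by_contra hx'
    exact Set.eq_empty_iff_forall_notMem.1 hm x ⟨hx.1, hx.2, hx'⟩
  set A : Set X := L ∩ u' with hA
  have hAc : IsCompact A := by
    have : A = L ∩ vᶜ := by
      ext x
      constructor
      · rintro ⟨hxL, hxu⟩
        exact ⟨hxL, fun hxv => huv.le_bot ⟨hxu.1, hxv⟩⟩
      · rintro ⟨hxL, hxv⟩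
        rcases hLuv hxL with h | h
        · exact ⟨hxL, h⟩
        · exact absurd h hxv
    rw [this]
    exact hLc.inter_right hvo.isClosed_compl
  -- the ball preimage W
  set W : Set X := f ⁻¹' Metric.ball y₀ ε with hW
  have hWo : IsOpen W := Metric.isOpen_ball.preimage hf
  -- A ∩ W = u' ∩ W, which is open; and W \ A is open
  have hAW : A ∩ W = u' ∩ W := by
    ext x
    constructor
    · rintro ⟨⟨_, hxu⟩, hxW⟩
      exact ⟨hxu, hxW⟩
    · rintro ⟨hxu, hxW⟩
      exact ⟨⟨⟨interior_subset hxu.2, Metric.ball_subset_closedBall hxW⟩, hxu⟩, hxW⟩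
  -- the component of x₀ in W is contained in A
  have hx₀W : x₀ ∈ W := by simp [hW, hx₀, hεpos]
  have hUsub : connectedComponentIn W x₀ ⊆ A := by
    have hpre : IsPreconnected (connectedComponentIn W x₀) :=
      isPreconnected_connectedComponentIn
    have hsub : connectedComponentIn W x₀ ⊆ (u' ∩ W) ∪ (W \ A) := by
      intro x hx
      have hxW : x ∈ W := connectedComponentIn_subset W x₀ hx
      by_cases hxA : x ∈ A
      · exact Or.inl ((Set.ext_iff.1 hAW x).1 ⟨hxA, hxW⟩)
      · exact Or.inr ⟨hxW, hxA⟩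
    have hdisj2 : Disjoint (u' ∩ W) (W \ A) := by
      rw [Set.disjoint_left]
      rintro x hxu ⟨hxW, hxA⟩
      exact hxA ((Set.ext_iff.1 hAW x).2 hxu).1
    have hne : (connectedComponentIn W x₀ ∩ (u' ∩ W)).Nonempty := by
      refine ⟨x₀, mem_connectedComponentIn hx₀W, ?_, hx₀W⟩
      exact hBu' ⟨⟨x₀, hx₀F⟩, hx₀V, rfl⟩
    have := hpre.subset_left_of_subset_union (hu'o.inter hWo)
      (hWo.sdiff hAc.isClosed) hdisj2 hsub hne
    intro x hx
    have hxW : x ∈ W := connectedComponentIn_subset W x₀ hx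
    exact ((Set.ext_iff.1 hAW x).2 (this hx)).1
  -- conclude: closure of the component is a closed subset of the compact A
  have hclsub : closure (connectedComponentIn W x₀) ⊆ A :=
    closure_minimal hUsub hAc.isClosed
  exact hAc.of_isClosed_subset isClosed_closure hclsub
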